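/- Let n ≥ 2 and M > 0. Then there exists σ > 0 such that for all ξ, η ∈ H = {x ∈ ℝⁿ : x₁ < 0} with |ξ−η| = 1, |ξ| ≤ M and |η| ≤ M, Boggio's biharmonic Green function of the half-space satisfies G_H(ξ,η) ≥ σ ξ₁² η₁². -/

import Mathlib

open MeasureTheory Real

noncomputable section

/-- Reflection `x* = (−x₁, x₂, …, xₙ)` across the hyperplane `∂H = {x₁ = 0}`. -/
def reflN (n : ℕ) (x : EuclideanSpace ℝ (Fin n)) : EuclideanSpace ℝ (Fin n) :=
  WithLp.toLp 2 (fun i : Fin n => if (i : ℕ) = 0 then -(x i) else x i)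

/-- `eₙ`, the Lebesgue volume of the unit ball of `ℝⁿ`. -/
def ballVol (n : ℕ) : ℝ := (volume (Metric.ball (0 : EuclideanSpace ℝ (Fin n)) 1)).toReal

/-- Boggio's biharmonic Green function of the half-space `H = {x ∈ ℝⁿ : x₁ < 0}`:
`G_H(x,y) = (1/(4 n eₙ)) |x−y|^{4−n} ∫₁^{|x*−y|/|x−y|} (v²−1) v^{1−n} dv`. -/
def boggioN (n : ℕ) (x y : EuclideanSpace ℝ (Fin n)) : ℝ :=
  (1 / (4 * n * ballVol n)) * dist x y ^ ((4:ℝ) - n) *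
    ∫ v in (1:ℝ)..(dist (reflN n x) y / dist x y), (v ^ 2 - 1) * v ^ ((1:ℝ) - n)

lemma ballVol_pos (n : ℕ) : 0 < ballVol n := by
  have h1 : (0:ENNReal) < volume (Metric.ball (0 : EuclideanSpace ℝ (Fin n)) 1) :=
    Metric.measure_ball_pos volume 0 one_pos
  exact ENNReal.toReal_pos h1.ne' measure_ball_lt_top.ne

lemma dist_sq_eq (n : ℕ) (a b : EuclideanSpace ℝ (Fin n)) :
    dist a b ^ 2 = ∑ i, (a i - b i) ^ 2 := by
  rw [EuclideanSpace.dist_eq, Real.sq_sqrt (Finset.sum_nonneg fun i _ => sq_nonneg _)]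
  exact Finset.sum_congr rfl fun i _ => by rw [Real.dist_eq, sq_abs]

lemma dist_refl_sq (n : ℕ) (hn : 0 < n) (x y : EuclideanSpace ℝ (Fin n)) :
    dist (reflN n x) y ^ 2 = dist x y ^ 2 + 4 * x ⟨0, hn⟩ * y ⟨0, hn⟩ := by
  rw [dist_sq_eq, dist_sq_eq]
  set i0 : Fin n := ⟨0, hn⟩ with hi0
  rw [← Finset.add_sum_erase _ (fun i => (reflN n x i - y i) ^ 2) (Finset.mem_univ i0),
      ← Finset.add_sum_erase _ (fun i => (x i - y i) ^ 2) (Finset.mem_univ i0)]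
  have h1 : ∑ i ∈ Finset.univ.erase i0, (reflN n x i - y i) ^ 2
      = ∑ i ∈ Finset.univ.erase i0, (x i - y i) ^ 2 := by
    refine Finset.sum_congr rfl fun i hi => ?_
    have hne : (i : ℕ) ≠ 0 := fun h => (Finset.mem_erase.mp hi).1 (Fin.ext h)
    simp [reflN, hne]
  rw [h1]
  have h2 : reflN n x i0 = -(x i0) := by simp [reflN, hi0]
  rw [h2]; ring

set_option maxHeartbeats 1000000

/-- uniform local positivity of Boggio's Green function of the half-space:
for unit-distance points `ξ, η ∈ H` in a ball of radius `M`, `G_H(ξ,η) ≥ σ ξ₁² η₁²`. -/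
theorem boggio_lower_bound_unit_distance (n : ℕ) (hn : 2 ≤ n) (M : ℝ) (hM : 0 < M) :
    ∃ σ > (0:ℝ), ∀ ξ η : EuclideanSpace ℝ (Fin n),
      ξ ⟨0, by omega⟩ < 0 → η ⟨0, by omega⟩ < 0 →
      dist ξ η = 1 → ‖ξ‖ ≤ M → ‖η‖ ≤ M →
      boggioN n ξ η ≥ σ * (ξ ⟨0, by omega⟩) ^ 2 * (η ⟨0, by omega⟩) ^ 2 := by
  have hn0 : 0 < n := by omega
  set B : ℝ := Real.sqrt (1 + 4 * M ^ 2) with hBdef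
  have hB0 : 0 ≤ B := Real.sqrt_nonneg _
  have hBsq : B ^ 2 = 1 + 4 * M ^ 2 := Real.sq_sqrt (by positivity)
  have hB1 : 1 ≤ B := by nlinarith [sq_nonneg M]
  have hBe : (0:ℝ) < B ^ ((1:ℝ) - n) := Real.rpow_pos_of_pos (by linarith) _
  have hc : (0:ℝ) < 1 / (4 * n * ballVol n) := by
    have := ballVol_pos n
    have hn' : (0:ℝ) < (n:ℝ) := by exact_mod_cast hn0
    positivity
  refine ⟨(1 / (4 * n * ballVol n)) * (16 * B ^ ((1:ℝ) - n) / (B + 1) ^ 2), by positivity,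
    fun ξ η hξ hη hdist hξM hηM => ?_⟩
  set i0 : Fin n := ⟨0, hn0⟩ with hi0
  set a : ℝ := ξ i0 with hadef
  set b : ℝ := η i0 with hbdef
  have ha : a < 0 := hξ
  have hb : b < 0 := hη
  set t : ℝ := a * b with htdef
  have ht : 0 < t := mul_pos_of_neg_of_neg ha hb
  have hnormsq : ∀ z : EuclideanSpace ℝ (Fin n), (z i0) ^ 2 ≤ ‖z‖ ^ 2 := by
    intro z
    have h1 : ‖z‖ ^ 2 = ∑ i, (z i) ^ 2 := by
      rw [EuclideanSpace.norm_eq, Real.sq_sqrt (Finset.sum_nonneg fun i _ => sq_nonneg _)]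
      exact Finset.sum_congr rfl fun i _ => by rw [Real.norm_eq_abs, sq_abs]
    rw [h1]
    exact Finset.single_le_sum (fun i _ => sq_nonneg (z i)) (Finset.mem_univ i0)
  have ha2 : a ^ 2 ≤ M ^ 2 :=
    le_trans (hnormsq ξ) (pow_le_pow_left₀ (norm_nonneg _) hξM 2)
  have hb2 : b ^ 2 ≤ M ^ 2 :=
    le_trans (hnormsq η) (pow_le_pow_left₀ (norm_nonneg _) hηM 2)
  have htM : t ≤ M ^ 2 := by nlinarith [mul_le_mul ha2 hb2 (sq_nonneg b) (sq_nonneg M)]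
  set A : ℝ := dist (reflN n ξ) η with hAdef
  have hA0 : 0 ≤ A := dist_nonneg
  have hA2 : A ^ 2 = 1 + 4 * t := by
    rw [hAdef, dist_refl_sq n hn0 ξ η, hdist]; ring
  have hA1 : 1 ≤ A := by nlinarith
  have hAB : A ≤ B := by nlinarith
  have hAm1 : 4 * t / (B + 1) ≤ A - 1 := by
    rw [div_le_iff₀ (by linarith)]
    nlinarith
  have htB : 0 ≤ 4 * t / (B + 1) := by positivity
  -- integral estimates
  have hg_int : IntervalIntegrable (fun v : ℝ => (v ^ 2 - 1) * v ^ ((1:ℝ) - n)) volume 1 A := by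
    apply ContinuousOn.intervalIntegrable
    apply ContinuousOn.mul
    · exact (continuous_pow 2).continuousOn.sub continuousOn_const
    · intro v hv
      rw [Set.uIcc_of_le hA1] at hv
      exact (Real.continuousAt_rpow_const v _ (Or.inl (by linarith [hv.1]))).continuousWithinAt
  have hf_int : IntervalIntegrable (fun v : ℝ => (v ^ 2 - 1) * B ^ ((1:ℝ) - n)) volume 1 A :=
    (((continuous_pow 2).sub continuous_const).mul continuous_const).intervalIntegrable _ _
  have hmono : ∀ v ∈ Set.Icc (1:ℝ) A,
      (v ^ 2 - 1) * B ^ ((1:ℝ) - n) ≤ (v ^ 2 - 1) * v ^ ((1:ℝ) - n) := by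
    intro v hv
    have hv1 : 1 ≤ v := hv.1
    have hvB : v ≤ B := le_trans hv.2 hAB
    have hrp : B ^ ((1:ℝ) - n) ≤ v ^ ((1:ℝ) - n) := by
      apply Real.rpow_le_rpow_of_nonpos (by linarith) hvB
      have : (2:ℝ) ≤ (n:ℝ) := by exact_mod_cast hn
      linarith
    have h01 : (0:ℝ) ≤ v ^ 2 - 1 := by nlinarith
    exact mul_le_mul_of_nonneg_left hrp h01
  have hIf : ∫ v in (1:ℝ)..A, (v ^ 2 - 1) * B ^ ((1:ℝ) - n)
      = ((A ^ 3 - 1) / 3 - (A - 1)) * B ^ ((1:ℝ) - n) := by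
    rw [intervalIntegral.integral_mul_const]
    congr 1
    rw [intervalIntegral.integral_sub ((continuous_pow 2).intervalIntegrable _ _)
      (intervalIntegrable_const), integral_pow, intervalIntegral.integral_const]
    norm_num
  have hI1 : ((A ^ 3 - 1) / 3 - (A - 1)) * B ^ ((1:ℝ) - n)
      ≤ ∫ v in (1:ℝ)..A, (v ^ 2 - 1) * v ^ ((1:ℝ) - n) := by
    rw [← hIf]
    exact intervalIntegral.integral_mono_on hA1 hf_int hg_int hmono
  have hI2 : (4 * t / (B + 1)) ^ 2 * B ^ ((1:ℝ) - n)
      ≤ ((A ^ 3 - 1) / 3 - (A - 1)) * B ^ ((1:ℝ) - n) := by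
    apply mul_le_mul_of_nonneg_right _ hBe.le
    have h1 : (4 * t / (B + 1)) ^ 2 ≤ (A - 1) ^ 2 := pow_le_pow_left₀ htB hAm1 2
    have h2 : (A - 1) ^ 2 ≤ (A ^ 3 - 1) / 3 - (A - 1) := by
      nlinarith [mul_nonneg (sq_nonneg (A - 1)) (sub_nonneg.mpr hA1)]
    linarith
  -- assemble
  rw [boggioN, hdist, ← hAdef, div_one, Real.one_rpow, mul_one]
  have key : (4 * t / (B + 1)) ^ 2 * B ^ ((1:ℝ) - n)
      ≤ ∫ v in (1:ℝ)..A, (v ^ 2 - 1) * v ^ ((1:ℝ) - n) := le_trans hI2 hI1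
  have heq : 1 / (4 * ↑n * ballVol n) * (16 * B ^ ((1:ℝ) - n) / (B + 1) ^ 2) * a ^ 2 * b ^ 2
      = 1 / (4 * ↑n * ballVol n) * ((4 * t / (B + 1)) ^ 2 * B ^ ((1:ℝ) - n)) := by
    rw [htdef]; field_simp; ring
  rw [ge_iff_le, heq]
  exact mul_le_mul_of_nonneg_left key hc.le

end
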